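/- arXiv:0910.4636 — 2 statements merged into one kernel-verified Lean document; each statement's English description precedes it below -/
import Mathlib

section
/- For any row-stochastic matrix A on a finite state space S and any two probability vectors π₁, π₂ on S, the total variation distance between A'π₁ and A'π₂ satisfies ‖A'π₁ − A'π₂‖ ≤ δ(A)·‖π₁ − π₂‖, where δ(A) = (1/2)·sup_{i,j} ‖A(i,·) − A(j,·)‖ is the Dobrushin coefficient of A. -/
open Finset

/-- Dobrushin coefficient of a matrix `A` on a finite state space. -/
noncomputable def dobrushin {S : Type*} [Fintype S] [Nonempty S] (A : S → S → ℝ) : ℝ :=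
  (1 / 2) * (Finset.univ.sup' Finset.univ_nonempty
    (fun p : S × S => ∑ k, |A p.1 k - A p.2 k|))

/-- For a row-stochastic matrix `A` and probability vectors `π₁, π₂`,
`‖A'π₁ − A'π₂‖ ≤ δ(A)·‖π₁ − π₂‖`. -/
theorem tv_contraction_dobrushin {S : Type*} [Fintype S] [Nonempty S]
    (A : S → S → ℝ) (hA0 : ∀ i j, 0 ≤ A i j) (hA1 : ∀ i, ∑ j, A i j = 1)
    (π₁ π₂ : S → ℝ) (hπ₁0 : ∀ i, 0 ≤ π₁ i) (hπ₁1 : ∑ i, π₁ i = 1)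
    (hπ₂0 : ∀ i, 0 ≤ π₂ i) (hπ₂1 : ∑ i, π₂ i = 1) :
    ∑ j, |(∑ i, π₁ i * A i j) - (∑ i, π₂ i * A i j)| ≤
      dobrushin A * ∑ i, |π₁ i - π₂ i| := by
  set D : ℝ := Finset.univ.sup' Finset.univ_nonempty
    (fun p : S × S => ∑ k, |A p.1 k - A p.2 k|) with hD
  have hDle : ∀ i i' : S, ∑ k, |A i k - A i' k| ≤ D := by
    intro i i'
    exact Finset.le_sup' (fun p : S × S => ∑ k, |A p.1 k - A p.2 k|)
      (Finset.mem_univ (i, i'))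
  have hD0 : 0 ≤ D := by
    obtain ⟨i⟩ := ‹Nonempty S›
    have := hDle i i
    simpa using this
  set f : S → ℝ := fun i => π₁ i - π₂ i with hf
  have hsumf : ∑ i, f i = 0 := by
    simp [hf, Finset.sum_sub_distrib, hπ₁1, hπ₂1]
  set p : S → ℝ := fun i => max (f i) 0 with hp
  set q : S → ℝ := fun i => max (-f i) 0 with hq
  have hp0 : ∀ i, 0 ≤ p i := fun i => le_max_right _ _
  have hq0 : ∀ i, 0 ≤ q i := fun i => le_max_right _ _
  have hpq : ∀ i, p i - q i = f i := by
    intro i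
    rcases le_total (f i) 0 with h | h
    · simp [hp, hq, max_eq_right h, max_eq_left (neg_nonneg.mpr h)]
    · simp [hp, hq, max_eq_left h, max_eq_right (neg_nonpos.mpr h)]
  have habs : ∀ i, p i + q i = |f i| := by
    intro i
    rcases le_total (f i) 0 with h | h
    · simp [hp, hq, max_eq_right h, max_eq_left (neg_nonneg.mpr h), abs_of_nonpos h]
    · simp [hp, hq, max_eq_left h, max_eq_right (neg_nonpos.mpr h), abs_of_nonneg h]
  set m : ℝ := ∑ i, p i with hm
  have hm0 : 0 ≤ m := Finset.sum_nonneg fun i _ => hp0 i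
  have hmq : ∑ i, q i = m := by
    have : ∑ i, (p i - q i) = 0 := by
      rw [Finset.sum_congr rfl fun i _ => hpq i]; exact hsumf
    have := Finset.sum_sub_distrib (G := ℝ) (f := p) (g := q) (s := Finset.univ) ▸ this
    linarith [Finset.sum_sub_distrib (G := ℝ) (f := p) (g := q) (s := Finset.univ)]
  have habs_sum : ∑ i, |f i| = 2 * m := by
    calc ∑ i, |f i| = ∑ i, (p i + q i) := by
          exact (Finset.sum_congr rfl fun i _ => (habs i).symm)
      _ = m + m := by rw [Finset.sum_add_distrib, hmq]
      _ = 2 * m := by ring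
  -- rewrite goal
  have hgoal_lhs : ∀ j, (∑ i, π₁ i * A i j) - (∑ i, π₂ i * A i j) = ∑ i, f i * A i j := by
    intro j
    rw [← Finset.sum_sub_distrib]
    exact Finset.sum_congr rfl fun i _ => by rw [hf]; ring
  have hdob : dobrushin A = (1/2) * D := rfl
  rw [hdob, habs_sum]
  simp only [hgoal_lhs]
  -- now goal : ∑ j, |∑ i, f i * A i j| ≤ 1/2 * D * (2 * m)
  rcases eq_or_lt_of_le hm0 with hm0' | hmpos
  · -- m = 0 : all p, q zero so f = 0
    have hpz : ∀ i, p i = 0 := by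
      intro i
      have := (Finset.sum_eq_zero_iff_of_nonneg (fun i _ => hp0 i)).mp hm0'.symm
      exact this i (Finset.mem_univ i)
    have hqz : ∀ i, q i = 0 := by
      intro i
      have h0 : ∑ i, q i = 0 := by rw [hmq, ← hm0']
      exact (Finset.sum_eq_zero_iff_of_nonneg (fun i _ => hq0 i)).mp h0 i (Finset.mem_univ i)
    have hfz : ∀ i, f i = 0 := fun i => by rw [← hpq i, hpz i, hqz i]; ring
    have hz : ∀ j, |∑ i, f i * A i j| = 0 := by
      intro j
      rw [Finset.sum_eq_zero fun i _ => by rw [hfz i]; ring]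
      simp
    rw [Finset.sum_congr rfl fun j _ => hz j]
    simp [← hm0']
  · -- main case
    have key : ∀ j, m * |∑ i, f i * A i j| ≤ ∑ i, ∑ i', p i * q i' * |A i j - A i' j| := by
      intro j
      have hid : m * (∑ i, f i * A i j) = ∑ i, ∑ i', p i * q i' * (A i j - A i' j) := by
        have expand : ∀ i, ∑ i', p i * q i' * (A i j - A i' j)
            = p i * A i j * m - p i * (∑ i', q i' * A i' j) := by
          intro i
          rw [← hmq, Finset.mul_sum, Finset.mul_sum, ← Finset.sum_sub_distrib]
          exact Finset.sum_congr rfl fun i' _ => by ring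
        rw [Finset.sum_congr rfl fun i _ => expand i, Finset.sum_sub_distrib]
        have h1 : ∑ i, p i * A i j * m = (∑ i, p i * A i j) * m := by
          rw [Finset.sum_mul]
        have h2 : ∑ i, p i * (∑ i', q i' * A i' j) = m * (∑ i', q i' * A i' j) := by
          rw [← Finset.sum_mul, ← hm]
        rw [h1, h2]
        have h3 : ∑ i, f i * A i j = (∑ i, p i * A i j) - (∑ i, q i * A i j) := by
          rw [← Finset.sum_sub_distrib]
          exact Finset.sum_congr rfl fun i _ => by rw [← hpq i]; ring
        rw [h3]; ring
      calc m * |∑ i, f i * A i j| = |m * (∑ i, f i * A i j)| := by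
            rw [abs_mul, abs_of_nonneg hm0]
        _ = |∑ i, ∑ i', p i * q i' * (A i j - A i' j)| := by rw [hid]
        _ ≤ ∑ i, |∑ i', p i * q i' * (A i j - A i' j)| := Finset.abs_sum_le_sum_abs _ _
        _ ≤ ∑ i, ∑ i', |p i * q i' * (A i j - A i' j)| :=
            Finset.sum_le_sum fun i _ => Finset.abs_sum_le_sum_abs _ _
        _ = ∑ i, ∑ i', p i * q i' * |A i j - A i' j| := by
            refine Finset.sum_congr rfl fun i _ => Finset.sum_congr rfl fun i' _ => ?_
            rw [abs_mul, abs_mul, abs_of_nonneg (hp0 i), abs_of_nonneg (hq0 i')]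
    have total : m * (∑ j, |∑ i, f i * A i j|) ≤ m * m * D := by
      calc m * (∑ j, |∑ i, f i * A i j|) = ∑ j, m * |∑ i, f i * A i j| := by
            rw [Finset.mul_sum]
        _ ≤ ∑ j, ∑ i, ∑ i', p i * q i' * |A i j - A i' j| :=
            Finset.sum_le_sum fun j _ => key j
        _ = ∑ i, ∑ i', ∑ j, p i * q i' * |A i j - A i' j| := by
            rw [Finset.sum_comm]
            exact Finset.sum_congr rfl fun i _ => Finset.sum_comm
        _ = ∑ i, ∑ i', p i * q i' * (∑ j, |A i j - A i' j|) := by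
            refine Finset.sum_congr rfl fun i _ => Finset.sum_congr rfl fun i' _ => ?_
            rw [Finset.mul_sum]
        _ ≤ ∑ i, ∑ i', p i * q i' * D := by
            refine Finset.sum_le_sum fun i _ => Finset.sum_le_sum fun i' _ => ?_
            exact mul_le_mul_of_nonneg_left (hDle i i') (mul_nonneg (hp0 i) (hq0 i'))
        _ = m * m * D := by
            have step : ∀ i : S, ∑ i', p i * q i' * D = p i * m * D := by
              intro i
              rw [Finset.sum_congr rfl fun i' _ => (by ring : p i * q i' * D = q i' * (p i * D)),
                ← Finset.sum_mul, hmq]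
              ring
            rw [Finset.sum_congr rfl fun i _ => step i]
            rw [Finset.sum_congr rfl fun i _ => (by ring : p i * m * D = p i * (m * D)),
              ← Finset.sum_mul, ← hm]
            ring
    have total' : m * (∑ j, |∑ i, f i * A i j|) ≤ m * (m * D) := by
      rw [← mul_assoc]; exact total
    have := le_of_mul_le_mul_left total' hmpos
    calc ∑ j, |∑ i, f i * A i j| ≤ m * D := this
      _ = 1/2 * D * (2 * m) := by ring
end

section
/- Let A be a row-stochastic K×K matrix of the form A(i,j) = u(i,j)·b(j) / Σ_k u(i,k)·b(k), where u(i,j) ≥ c·v(j) > 0 bounded entrywise as c·v(j) ≤ u(i,j) ≤ C·v(j) with 0 < c ≤ C, v(j) > 0, and b(j) ≥ 0 with Σ_j u(i,j)b(j) > 0 for all i. Then A satisfies the Doeblin condition with ε = c/C and λ(j) = v(j)b(j)/Σ_k v(k)b(k), and hence δ(A) ≤ 1 − c/C. -/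
open Finset

/-- Normalized matrices with entrywise-comparable kernels satisfy the Doeblin
condition with `ε = c/C` and `λ(j) = v(j)b(j)/Σ_k v(k)b(k)`, hence
`δ(A) ≤ 1 − c/C`. -/
theorem doeblin_of_comparable_kernel {K : ℕ} [NeZero K] (hK : 0 < K)
    (u : Fin K → Fin K → ℝ) (b v : Fin K → ℝ) (c C : ℝ)
    (hc : 0 < c) (hcC : c ≤ C)
    (hv : ∀ j, 0 < v j)
    (hlow : ∀ i j, c * v j ≤ u i j) (hup : ∀ i j, u i j ≤ C * v j)
    (hb : ∀ j, 0 ≤ b j)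
    (hpos : ∀ i, 0 < ∑ k, u i k * b k) :
    (∀ i j, (c / C) * (v j * b j / ∑ k, v k * b k) ≤
        u i j * b j / ∑ k, u i k * b k) ∧
    dobrushin (fun i j => u i j * b j / ∑ k, u i k * b k) ≤ 1 - c / C := by
  have hC : 0 < C := lt_of_lt_of_le hc hcC
  set Sv : ℝ := ∑ k, v k * b k with hSvdef
  have hSuC : ∀ i, (∑ k, u i k * b k) ≤ C * Sv := by
    intro i
    rw [hSvdef, Finset.mul_sum]
    apply Finset.sum_le_sum
    intro k _
    have := hup i k
    nlinarith [hb k]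
  have hSv : 0 < Sv := by
    have h0 := hpos ⟨0, hK⟩
    have := hSuC ⟨0, hK⟩
    nlinarith
  have key : ∀ i j, (c / C) * (v j * b j / Sv) ≤
      u i j * b j / ∑ k, u i k * b k := by
    intro i j
    have h1 : (c / C) * (v j * b j / Sv) = (c * (v j * b j)) / (C * Sv) := by
      field_simp
    rw [h1]
    apply div_le_div₀
    · exact mul_nonneg ((mul_pos hc (hv j)).le.trans (hlow i j)) (hb j)
    · calc c * (v j * b j) = (c * v j) * b j := by ring
        _ ≤ u i j * b j := by
            apply mul_le_mul_of_nonneg_right (hlow i j) (hb j)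
    · exact hpos i
    · exact hSuC i
  refine ⟨key, ?_⟩
  -- row sums
  have hrow : ∀ i, (∑ k, u i k * b k / ∑ k', u i k' * b k') = 1 := by
    intro i
    rw [← Finset.sum_div, div_self (ne_of_gt (hpos i))]
  have hlamsum : (∑ k, v k * b k / Sv) = 1 := by
    rw [← Finset.sum_div, div_self (ne_of_gt hSv)]
  unfold dobrushin
  rw [mul_comm, ← le_div_iff₀ (by norm_num : (0:ℝ) < 1/2)]
  apply Finset.sup'_le
  rintro ⟨i, i'⟩ _
  simp only
  have hbd : ∀ k : Fin K,
      |u i k * b k / ∑ k', u i k' * b k' - u i' k * b k / ∑ k', u i' k' * b k'| ≤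
      (u i k * b k / ∑ k', u i k' * b k' - (c / C) * (v k * b k / Sv)) +
      (u i' k * b k / ∑ k', u i' k' * b k' - (c / C) * (v k * b k / Sv)) := by
    intro k
    have h1 := key i k
    have h2 := key i' k
    rw [abs_sub_le_iff]
    constructor <;> linarith
  calc (∑ k, |u i k * b k / ∑ k', u i k' * b k' - u i' k * b k / ∑ k', u i' k' * b k'|)
      ≤ ∑ k, ((u i k * b k / ∑ k', u i k' * b k' - (c / C) * (v k * b k / Sv)) +
        (u i' k * b k / ∑ k', u i' k' * b k' - (c / C) * (v k * b k / Sv))) :=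
        Finset.sum_le_sum (fun k _ => hbd k)
    _ = (1 - c/C * 1) + (1 - c/C * 1) := by
        rw [Finset.sum_add_distrib, Finset.sum_sub_distrib, Finset.sum_sub_distrib,
          hrow i, hrow i', ← Finset.mul_sum, hlamsum]
    _ ≤ (1 - c / C) / (1 / 2) := by
        rw [div_div_eq_mul_div, div_one]; ring_nf; linarith
end
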